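/- Main Theorem: a state ρ on ℂ^d ⊗ ℂ^d is one-undistillable if and only if (1⊗Λ)(ρ) is positive semidefinite for every two-decomposable map Λ on d×d complex matrices. -/

import Mathlib

open Matrix Kronecker BigOperators
open scoped ComplexOrder

noncomputable section

/-- `d × d` complex matrices. -/
abbrev Mat (d : ℕ) := Matrix (Fin d) (Fin d) ℂ

/-- Matrices on `ℂ^d ⊗ ℂ^d`, indexed by `Fin d × Fin d`. -/
abbrev Mat2 (d : ℕ) := Matrix (Fin d × Fin d) (Fin d × Fin d) ℂ

/-- Partial transpose on Bob's system: `(M^{T_B})_{(i,k),(j,l)} = M_{(i,l),(j,k)}`. -/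
def ptB {d : ℕ} (M : Mat2 d) : Mat2 d :=
  Matrix.of fun p q => M (p.1, q.2) (q.1, p.2)

/-- Schmidt rank of a vector `ψ : Fin d × Fin d → ℂ`: the rank of the `d × d`
matrix with `(i,j)` entry `ψ (i,j)`. -/
def schmidtRank {d : ℕ} (ψ : Fin d × Fin d → ℂ) : ℕ :=
  (Matrix.of fun i j => ψ (i, j) : Mat d).rank

/-- A state: positive semidefinite with trace one. -/
def IsState {d : ℕ} (ρ : Mat2 d) : Prop := ρ.PosSemidef ∧ ρ.trace = 1

/-- One-distillability: some Schmidt-rank-≤2 vector has negative expectation on `ρ^{T_B}`. -/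
def OneDistillable {d : ℕ} (ρ : Mat2 d) : Prop :=
  ∃ ψ : Fin d × Fin d → ℂ, schmidtRank ψ ≤ 2 ∧
    (star ψ ⬝ᵥ (ptB ρ).mulVec ψ).re < 0

/-- The rank-one matrix `|ψ⟩⟨ψ|`, with entries `ψ x * conj (ψ y)`. -/
def outer {d : ℕ} (ψ : Fin d × Fin d → ℂ) : Mat2 d :=
  Matrix.vecMulVec ψ (star ψ)

/-- The maximally entangled projector `P₊`, `(P₊)_{(i,k),(j,l)} = (1/d)·δ_{ik}·δ_{jl}`. -/
def Pplus (d : ℕ) : Mat2 d :=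
  Matrix.of fun p q =>
    ((if p.1 = p.2 then (1 : ℂ) else 0) * (if q.1 = q.2 then (1 : ℂ) else 0)) / d

/-- The flip operator `V_{(i,k),(j,l)} = δ_{il}·δ_{jk}`. -/
def flipOp (d : ℕ) : Mat2 d :=
  Matrix.of fun p q => if p.1 = q.2 ∧ q.1 = p.2 then (1 : ℂ) else 0

/-- The operator `Z = Σ_i |ii⟩⟨ii|`, `Z_{(i,k),(j,l)} = δ_{ik}·δ_{jl}·δ_{ij}`. -/
def Zop (d : ℕ) : Mat2 d :=
  Matrix.of fun p q => if p.1 = p.2 ∧ q.1 = q.2 ∧ p.1 = q.1 then (1 : ℂ) else 0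

/-- Partial trace over Alice: `(Tr_A M)_{k,l} = Σ_i M_{(i,k),(i,l)}`. -/
def trA {d : ℕ} (M : Mat2 d) : Mat d :=
  Matrix.of fun k l => ∑ i, M (i, k) (i, l)

/-- Alice's reduced state: `(ρ_A)_{i,j} = Σ_k ρ_{(i,k),(j,k)}`. -/
def redA {d : ℕ} (ρ : Mat2 d) : Mat d :=
  Matrix.of fun i j => ∑ k, ρ (i, k) (j, k)

/-- Bob's reduced state: `(ρ_B)_{k,l} = Σ_i ρ_{(i,k),(i,l)}`. -/
def redB {d : ℕ} (ρ : Mat2 d) : Mat d := trA ρ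

/-- `(1 ⊗ Λ)(M)`, acting with `Λ` on Bob's blocks. -/
def idTensor {d : ℕ} (Λ : Mat d → Mat d) (M : Mat2 d) : Mat2 d :=
  Matrix.of fun p q => Λ (Matrix.of fun k l => M (p.1, k) (q.1, l)) p.2 q.2

/-- `(Λ ⊗ 1)(M)`, acting with `Λ` on Alice's blocks. -/
def tensorId {d : ℕ} (Λ : Mat d → Mat d) (M : Mat2 d) : Mat2 d :=
  Matrix.of fun p q => Λ (Matrix.of fun i j => M (i, p.2) (j, q.2)) p.1 q.1

/-- `(1_k ⊗ Λ)(M)` for `M` indexed by `Fin k × Fin d`. -/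
def idTensorK {d : ℕ} (k : ℕ) (Λ : Mat d → Mat d)
    (M : Matrix (Fin k × Fin d) (Fin k × Fin d) ℂ) :
    Matrix (Fin k × Fin d) (Fin k × Fin d) ℂ :=
  Matrix.of fun p q => Λ (Matrix.of fun m n => M (p.1, m) (q.1, n)) p.2 q.2

/-- Two-decomposable maps: `Λ(X) = Σᵢ Vᵢ · Xᵀ · Vᵢ†` with each `Vᵢ` of rank at most 2. -/
def TwoDecomposable {d : ℕ} (Λ : Mat d → Mat d) : Prop :=
  ∃ (n : ℕ) (V : Fin n → Mat d), (∀ i, (V i).rank ≤ 2) ∧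
    ∀ X : Mat d, Λ X = ∑ i, V i * Xᵀ * (V i)ᴴ

/-- The diagonal part of a matrix (off-diagonal entries set to zero). -/
def diagPart {d : ℕ} (X : Mat d) : Mat d := Matrix.diagonal fun i => X i i


lemma sum_ite_pull {α : Type*} [Fintype α] {P : Prop} [Decidable P] (f : α → ℂ) :
    (∑ x, if P then f x else 0) = if P then ∑ x, f x else 0 := by
  split <;> simp

lemma aux_kron (d : ℕ) (ρ : Mat2 d) (V : Mat d) :
    idTensor (fun X => V * Xᵀ * Vᴴ) ρ
      = ((1 : Mat d) ⊗ₖ V) * ptB ρ * ((1 : Mat d) ⊗ₖ V)ᴴ := by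
  ext ⟨i, k⟩ ⟨j, l⟩
  simp only [idTensor, ptB, Matrix.mul_apply, Matrix.kroneckerMap_apply,
    Matrix.conjTranspose_apply, Matrix.of_apply, Matrix.transpose_apply,
    Fintype.sum_prod_type, Matrix.one_apply, apply_ite (star : ℂ → ℂ), ite_mul, mul_ite,
    one_mul, zero_mul, mul_one, mul_zero, star_one, star_zero, sum_ite_pull,
    Finset.sum_ite_eq, Finset.sum_ite_eq', Finset.mul_sum, Finset.sum_mul,
    Finset.mem_univ, if_true]

lemma aux_sum (d n : ℕ) (ρ : Mat2 d) (V : Fin n → Mat d) :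
    idTensor (fun X => ∑ i, V i * Xᵀ * (V i)ᴴ) ρ
      = ∑ i, ((1 : Mat d) ⊗ₖ V i) * ptB ρ * ((1 : Mat d) ⊗ₖ V i)ᴴ := by
  have h : ∀ i, idTensor (fun X => V i * Xᵀ * (V i)ᴴ) ρ
      = ((1 : Mat d) ⊗ₖ V i) * ptB ρ * ((1 : Mat d) ⊗ₖ V i)ᴴ := fun i => aux_kron d ρ (V i)
  ext p q
  have h2 := fun i => congrFun (congrFun (h i) (p.1, p.2)) (q.1, q.2)
  simp only [idTensor, Matrix.of_apply] at h2 ⊢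
  simp only [Matrix.sum_apply]
  exact Finset.sum_congr rfl fun i _ => h2 i

lemma aux_quadform (d : ℕ) (H : Mat2 d) (A : Mat2 d) (φ : Fin d × Fin d → ℂ) :
    star φ ⬝ᵥ (A * H * Aᴴ).mulVec φ
      = star (Aᴴ.mulVec φ) ⬝ᵥ H.mulVec (Aᴴ.mulVec φ) := by
  rw [Matrix.star_mulVec, Matrix.conjTranspose_conjTranspose, ← Matrix.dotProduct_mulVec,
    Matrix.mulVec_mulVec, Matrix.mulVec_mulVec]

lemma aux_ptB_herm (d : ℕ) (ρ : Mat2 d) (hρ : ρ.IsHermitian) : (ptB ρ).IsHermitian := by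
  ext ⟨i, k⟩ ⟨j, l⟩
  simp only [ptB, Matrix.conjTranspose_apply, Matrix.of_apply]
  exact congrFun (congrFun hρ _) _

lemma aux_real (d : ℕ) (H : Mat2 d) (hH : H.IsHermitian) (ψ : Fin d × Fin d → ℂ) :
    (star ψ ⬝ᵥ H.mulVec ψ).im = 0 := by
  have key : star (star ψ ⬝ᵥ H.mulVec ψ) = star ψ ⬝ᵥ H.mulVec ψ := by
    simp only [dotProduct, Matrix.mulVec, star_sum, Pi.star_apply, star_mul', star_star,
      Finset.mul_sum]
    rw [Finset.sum_comm]
    refine Finset.sum_congr rfl fun p _ => Finset.sum_congr rfl fun q _ => ?_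
    rw [← hH.apply p q]
    ring
  exact Complex.conj_eq_iff_im.mp key

lemma aux_psi_rank (d : ℕ) (V : Mat d) (φ : Fin d × Fin d → ℂ) :
    schmidtRank (((1 : Mat d) ⊗ₖ V)ᴴ.mulVec φ) ≤ V.rank := by
  have hψ : (Matrix.of fun i j => ((1 : Mat d) ⊗ₖ V)ᴴ.mulVec φ (i, j) : Mat d)
      = (Matrix.of fun i j => φ (i, j)) * V.map star := by
    ext i n
    simp only [Matrix.mulVec, dotProduct, Matrix.conjTranspose_apply,
      Matrix.kroneckerMap_apply, Matrix.of_apply, Matrix.mul_apply, Matrix.map_apply,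
      Fintype.sum_prod_type, Matrix.one_apply, apply_ite (star : ℂ → ℂ), star_one, star_zero,
      ite_mul, one_mul, zero_mul, sum_ite_pull]
    rw [Finset.sum_ite_eq' Finset.univ i (fun x => ∑ x_1, star (V x_1 n) * φ (x, x_1))]
    simp [mul_comm]
  rw [schmidtRank, hψ]
  calc ((Matrix.of fun i j => φ (i, j)) * V.map star).rank ≤ (V.map star).rank :=
        Matrix.rank_mul_le_right _ _
    _ = V.rank := by
        have : V.map star = (Vᴴ)ᵀ := by ext i j; simp [Matrix.conjTranspose_apply]
        rw [this, Matrix.rank_transpose, Matrix.rank_conjTranspose]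

/-- Main Theorem: a state is one-undistillable iff
`(1⊗Λ)(ρ) ≥ 0` for every two-decomposable map `Λ`. -/
theorem oneUndistillable_iff_twoDecomposable (d : ℕ) (hd : 2 ≤ d)
    (ρ : Mat2 d) (hρ : IsState ρ) :
    ¬ OneDistillable ρ ↔
      ∀ Λ : Mat d → Mat d, TwoDecomposable Λ → (idTensor Λ ρ).PosSemidef := by
  have hptB : (ptB ρ).IsHermitian := aux_ptB_herm d ρ hρ.1.1
  constructor
  · intro hund Λ hΛ
    rw [OneDistillable] at hund
    push_neg at hund
    obtain ⟨n, V, hrank, hΛeq⟩ := hΛ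
    have hΛ' : Λ = fun X => ∑ i, V i * Xᵀ * (V i)ᴴ := funext hΛeq
    have heq : idTensor Λ ρ = ∑ i, ((1 : Mat d) ⊗ₖ V i) * ptB ρ * ((1 : Mat d) ⊗ₖ V i)ᴴ := by
      rw [hΛ']; exact aux_sum d n ρ V
    rw [heq]
    refine Matrix.PosSemidef.of_dotProduct_mulVec_nonneg ?_ ?_
    · show _ = _
      rw [Matrix.conjTranspose_sum]
      refine Finset.sum_congr rfl fun i _ => ?_
      rw [Matrix.conjTranspose_mul, Matrix.conjTranspose_mul,
        Matrix.conjTranspose_conjTranspose, hptB.eq, ← Matrix.mul_assoc]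
    · intro φ
      have hsum : ∀ (M : Fin n → Mat2 d),
          star φ ⬝ᵥ (∑ i, M i) *ᵥ φ = ∑ i, star φ ⬝ᵥ (M i) *ᵥ φ := by
        intro M
        simp only [Matrix.mulVec, dotProduct, Matrix.sum_apply, Finset.sum_mul,
          Finset.mul_sum]
        exact (Finset.sum_congr rfl fun x _ => Finset.sum_comm).trans Finset.sum_comm
      rw [hsum]
      refine Finset.sum_nonneg fun i _ => ?_
      rw [aux_quadform]
      set ψ := ((1 : Mat d) ⊗ₖ V i)ᴴ.mulVec φ with hψ
      have h1 : schmidtRank ψ ≤ 2 := le_trans (aux_psi_rank d (V i) φ) (hrank i)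
      have h2 := hund ψ h1
      have h3 := aux_real d (ptB ρ) hptB ψ
      rw [Complex.le_def]
      exact ⟨by simpa using h2, by simp [h3]⟩
  · intro hpsd hdist
    obtain ⟨ψ, hrank, hneg⟩ := hdist
    set V : Mat d := Matrix.of (fun k m => star (ψ (k, m))) with hV
    have hVrank : V.rank ≤ 2 := by
      have hVe : V = ((Matrix.of fun i j => ψ (i, j) : Mat d)ᴴ)ᵀ := by
        ext k m; simp [hV, Matrix.conjTranspose_apply]
      rw [hVe, Matrix.rank_transpose, Matrix.rank_conjTranspose]
      exact hrank
    have hΛ : TwoDecomposable (fun X => V * Xᵀ * Vᴴ) :=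
      ⟨1, fun _ => V, fun _ => hVrank, fun X => by simp⟩
    have hps := hpsd _ hΛ
    set φ : Fin d × Fin d → ℂ := fun p => if p.1 = p.2 then 1 else 0 with hφ
    have h2 := hps.dotProduct_mulVec_nonneg φ
    rw [aux_kron d ρ V, aux_quadform] at h2
    have hψeq : ((1 : Mat d) ⊗ₖ V)ᴴ.mulVec φ = ψ := by
      funext p
      simp only [Matrix.mulVec, dotProduct, Matrix.conjTranspose_apply,
        Matrix.kroneckerMap_apply, Fintype.sum_prod_type, Matrix.one_apply, hφ, hV,
        Matrix.of_apply, apply_ite (star : ℂ → ℂ), star_one, star_zero, ite_mul, mul_ite,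
        one_mul, zero_mul, mul_one, mul_zero, star_star, sum_ite_pull,
        Finset.sum_ite_eq, Finset.sum_ite_eq', Finset.mem_univ, if_true]
    rw [hψeq] at h2
    have := (Complex.le_def.mp h2).1
    simp only [Complex.zero_re] at this
    linarith
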